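/- Let (X,d) be a complete metric space, k ∈ ℕ, and T : X^k → X satisfy, for all u₁,…,u_{k+1} ∈ X: d(T(u₁,…,u_k), T(u₂,…,u_{k+1})) ≤ β(M(u,v))·M(u,v), where M(u,v) = max{ d(u_k, u_{k+1}), d(u_k, T(u₁,…,u_k)), d(u_{k+1}, T(u₂,…,u_{k+1})) } and β is a Geraghty function. Then there exists u ∈ X with T(u,u,…,u) = u. -/

import Mathlib

open Filter Topology
open Filter Topology

def IsGeraghty (β : ℝ → ℝ) : Prop :=
  (∀ t : ℝ, 0 ≤ t → 0 ≤ β t ∧ β t < 1) ∧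
  (∀ t : ℕ → ℝ, (∀ n, 0 ≤ t n) →
    Filter.Tendsto (fun n => β (t n)) Filter.atTop (nhds 1) →
    Filter.Tendsto t Filter.atTop (nhds 0))

lemma geraghty_sub_div_le {B s c η : ℝ} (hB : B ≤ 1) (hη : 0 < η) (hs : η ≤ s)
    (h : (1 - B) * s ≤ c) : 1 - c / η ≤ B := by
  have h2 : (1 - B) * η ≤ c :=
    le_trans (mul_le_mul_of_nonneg_left hs (by linarith)) h
  have h3 : 1 - B ≤ c / η := (le_div_iff₀ hη).mpr h2
  linarith

lemma geraghty_G1 {β : ℝ → ℝ} (hβ : IsGeraghty β) {p a g : ℕ → ℝ}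
    (hp : ∀ i, 0 ≤ p i) (ha0 : ∀ i, 0 ≤ a i)
    (ha : Tendsto a atTop (nhds 0)) (hg0 : ∀ i, 0 ≤ g i) (hg : Tendsto g atTop (nhds 0))
    (hineq : ∀ i, p i ≤ a i + β (max (p i) (g i)) * max (p i) (g i)) :
    Tendsto p atTop (nhds 0) := by
  by_contra hcon
  rw [Metric.tendsto_atTop] at hcon
  push_neg at hcon
  obtain ⟨η, hη, hfr⟩ := hcon
  have hfreq : ∃ᶠ i in atTop, η ≤ p i := by
    rw [Filter.frequently_atTop]
    intro N
    obtain ⟨n, hn, h2⟩ := hfr N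
    refine ⟨n, hn, ?_⟩
    rwa [Real.dist_eq, sub_zero, abs_of_nonneg (hp n)] at h2
  obtain ⟨φ, hφ, hpφ⟩ := Filter.extraction_of_frequently_atTop hfreq
  have haφ : Tendsto (fun n => a (φ n)) atTop (nhds 0) := ha.comp hφ.tendsto_atTop
  have hgφ : Tendsto (fun n => g (φ n)) atTop (nhds 0) := hg.comp hφ.tendsto_atTop
  have hev : ∀ᶠ n in atTop, g (φ n) < η := hgφ.eventually_lt_const hη
  have hlow : ∀ᶠ n in atTop, 1 - a (φ n) / η ≤ β (p (φ n)) := by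
    filter_upwards [hev] with n hn
    have hmax : max (p (φ n)) (g (φ n)) = p (φ n) := max_eq_left (le_trans hn.le (hpφ n))
    have h1 := hineq (φ n)
    rw [hmax] at h1
    exact geraghty_sub_div_le (hβ.1 _ (hp _)).2.le hη (hpφ n) (by nlinarith)
  have hBlim : Tendsto (fun n => β (p (φ n))) atTop (nhds 1) := by
    have hl : Tendsto (fun n => 1 - a (φ n) / η) atTop (nhds 1) := by
      have := (tendsto_const_nhds (x := (1:ℝ)) (f := atTop (α := ℕ))).sub (haφ.div_const η)
      simpa using this
    exact tendsto_of_tendsto_of_tendsto_of_le_of_le' hl tendsto_const_nhds hlow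
      (Eventually.of_forall fun n => ((hβ.1 _ (hp _)).2).le)
  have hp0 : Tendsto (fun n => p (φ n)) atTop (nhds 0) := hβ.2 _ (fun n => hp _) hBlim
  have : η ≤ 0 := ge_of_tendsto hp0 (Eventually.of_forall hpφ)
  linarith

lemma geraghty_G2 {β : ℝ → ℝ} (hβ : IsGeraghty β) {q : ℕ → ℝ} (hq0 : ∀ n, 0 ≤ q n)
    (h : ∀ n, q (n + 1) ≤ β (q n) * q n) : Tendsto q atTop (nhds 0) := by
  have hdec : ∀ n, q (n + 1) ≤ q n := fun n =>
    (h n).trans (by nlinarith [(hβ.1 (q n) (hq0 n)).1, (hβ.1 (q n) (hq0 n)).2, hq0 n])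
  have hant : Antitone q := antitone_nat_of_succ_le hdec
  have hbdd : BddBelow (Set.range q) := ⟨0, by rintro _ ⟨n, rfl⟩; exact hq0 n⟩
  have hL : Tendsto q atTop (nhds (⨅ n, q n)) := tendsto_atTop_ciInf hant hbdd
  have hL0 : 0 ≤ ⨅ n, q n := le_ciInf hq0
  rcases eq_or_lt_of_le hL0 with h0 | h0
  · rwa [← h0] at hL
  · exfalso
    have hLle : ∀ n, ⨅ m, q m ≤ q n := fun n => ciInf_le hbdd n
    have hq1 : Tendsto (fun n => q (n + 1)) atTop (nhds (⨅ n, q n)) :=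
      hL.comp (tendsto_add_atTop_nat 1)
    have hb1 : Tendsto (fun n => q (n + 1) / q n) atTop (nhds 1) := by
      have := hq1.div hL (ne_of_gt h0)
      rw [div_self (ne_of_gt h0)] at this
      exact this
    have hlow : ∀ n, q (n + 1) / q n ≤ β (q n) := fun n =>
      (div_le_iff₀ (lt_of_lt_of_le h0 (hLle n))).mpr (h n)
    have hB : Tendsto (fun n => β (q n)) atTop (nhds 1) :=
      tendsto_of_tendsto_of_tendsto_of_le_of_le hb1 tendsto_const_nhds hlow
        (fun n => (hβ.1 _ (hq0 n)).2.le)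
    have h00 : (⨅ n, q n) = 0 := tendsto_nhds_unique hL (hβ.2 q hq0 hB)
    linarith

noncomputable def porb {X : Type*} (k : ℕ) (T : (Fin k → X) → X) (x : X) (n : ℕ) : X :=
  if h : n < k then x
  else T (fun i : Fin k => porb k T x (n - k + ↑i))
termination_by n
decreasing_by
  have := i.isLt
  omega

lemma porb_spec {X : Type*} (k : ℕ) (T : (Fin k → X) → X) (x : X) {n : ℕ} (h : k ≤ n) :
    porb k T x n = T (fun i : Fin k => porb k T x (n - k + ↑i)) := by
  rw [porb]
  exact dif_neg (by omega)

theorem k_dim_geraghty_fixed_point {X : Type*} [MetricSpace X] [CompleteSpace X] [Nonempty X]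
    (k : ℕ) (hk : 0 < k) (β : ℝ → ℝ) (hβ : IsGeraghty β) (T : (Fin k → X) → X)
    (hT : ∀ w : ℕ → X,
      dist (T (fun i : Fin k => w i)) (T (fun i : Fin k => w (i + 1))) ≤
        β (max (dist (w (k - 1)) (w k))
            (max (dist (w (k - 1)) (T (fun i : Fin k => w i)))
              (dist (w k) (T (fun i : Fin k => w (i + 1)))))) *
          max (dist (w (k - 1)) (w k))
            (max (dist (w (k - 1)) (T (fun i : Fin k => w i)))
              (dist (w k) (T (fun i : Fin k => w (i + 1)))))) :
    ∃ u : X, T (fun _ => u) = u := by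
  obtain ⟨x0⟩ := ‹Nonempty X›
  set y : ℕ → X := porb k T x0 with hy
  have hyu : ∀ n : ℕ, y (n + k) = T (fun i : Fin k => y (n + ↑i)) := by
    intro n
    have h := porb_spec k T x0 (n := n + k) (by omega)
    rw [← hy] at h
    rw [h]
    congr 1
    funext i
    congr 1
    have := i.isLt
    omega
  -- the shifted-window inequality
  have key : ∀ (w : ℕ → X) (t : ℕ),
      dist (T (fun i : Fin k => w (t + ↑i))) (T (fun i : Fin k => w (t + 1 + ↑i))) ≤
        β (max (dist (w (t + (k - 1))) (w (t + k)))
            (max (dist (w (t + (k - 1))) (T (fun i : Fin k => w (t + ↑i))))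
              (dist (w (t + k)) (T (fun i : Fin k => w (t + 1 + ↑i)))))) *
          max (dist (w (t + (k - 1))) (w (t + k)))
            (max (dist (w (t + (k - 1))) (T (fun i : Fin k => w (t + ↑i))))
              (dist (w (t + k)) (T (fun i : Fin k => w (t + 1 + ↑i))))) := by
    intro w t
    have h : dist (T (fun i : Fin k => w (t + ↑i))) (T (fun i : Fin k => w (t + (↑i + 1)))) ≤
        β (max (dist (w (t + (k - 1))) (w (t + k)))
            (max (dist (w (t + (k - 1))) (T (fun i : Fin k => w (t + ↑i))))
              (dist (w (t + k)) (T (fun i : Fin k => w (t + (↑i + 1))))))) *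
          max (dist (w (t + (k - 1))) (w (t + k)))
            (max (dist (w (t + (k - 1))) (T (fun i : Fin k => w (t + ↑i))))
              (dist (w (t + k)) (T (fun i : Fin k => w (t + (↑i + 1)))))) := hT (fun j => w (t + j))
    have e : (fun i : Fin k => w (t + (↑i + 1))) = (fun i : Fin k => w (t + 1 + ↑i)) := by
      funext i; congr 1; omega
    rw [e] at h
    exact h
  -- part (b): consecutive distances tend to 0
  have hq2 : ∀ n, dist (y (n + k)) (y (n + k + 1)) ≤
      β (dist (y (n + (k - 1))) (y (n + (k - 1) + 1))) *
        dist (y (n + (k - 1))) (y (n + (k - 1) + 1)) := by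
    intro n
    have h := key y n
    have e1 : T (fun i : Fin k => y (n + ↑i)) = y (n + k) := (hyu n).symm
    have e2 : T (fun i : Fin k => y (n + 1 + ↑i)) = y (n + k + 1) := by
      rw [← hyu (n + 1)]
      congr 1
      omega
    rw [e1, e2] at h
    have e3 : n + k = n + (k - 1) + 1 := by omega
    rw [e3] at h ⊢
    rw [← max_assoc, max_self] at h
    set a := dist (y (n + (k - 1))) (y (n + (k - 1) + 1)) with ha
    set b := dist (y (n + (k - 1) + 1)) (y (n + (k - 1) + 1 + 1)) with hb
    rcases le_total b a with hba | hab
    · rwa [max_eq_left hba] at h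
    · rw [max_eq_right hab] at h
      have hb0 : (0:ℝ) ≤ b := dist_nonneg
      have hblt := (hβ.1 b hb0).2
      have hbz : b = 0 := by nlinarith
      rw [hbz]
      exact mul_nonneg (hβ.1 _ dist_nonneg).1 dist_nonneg
  have hd : Tendsto (fun n => dist (y n) (y (n + 1))) atTop (nhds 0) := by
    have h1 : Tendsto (fun n => dist (y (n + (k - 1))) (y (n + (k - 1) + 1))) atTop (nhds 0) := by
      apply geraghty_G2 hβ (fun n => dist_nonneg)
      intro n
      show dist (y (n + 1 + (k - 1))) (y (n + 1 + (k - 1) + 1)) ≤ _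
      rw [show n + 1 + (k - 1) = n + k from by omega]
      exact hq2 n
    exact (tendsto_add_atTop_iff_nat (k - 1)).mp h1
  -- part (c): the orbit is Cauchy
  have hcau : CauchySeq y := by
    by_contra hcon
    rw [Metric.cauchySeq_iff] at hcon
    push_neg at hcon
    obtain ⟨ε, hε, hcon⟩ := hcon
    choose mf hmf nf hnf hsep using fun i => hcon (i + k)
    have hmfk : ∀ i, k ≤ mf i := fun i => le_trans (by omega) (hmf i)
    have hnfk : ∀ i, k ≤ nf i := fun i => le_trans (by omega) (hnf i)
    obtain ⟨W, hW⟩ : ∃ W : ℕ → ℕ → X,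
        W = fun i j => if j < k then y (mf i + 1 - k + j) else y (nf i + (j - k)) := ⟨_, rfl⟩
    obtain ⟨Z, hZ⟩ : ∃ Z : ℕ → ℕ → X,
        Z = fun i t => T (fun l : Fin k => W i (t + ↑l)) := ⟨_, rfl⟩
    obtain ⟨p, hp⟩ : ∃ p : ℕ → ℕ → ℝ,
        p = fun s i => dist (y (nf i + s)) (Z i (s + 1)) := ⟨_, rfl⟩
    have hWlt : ∀ i j, j < k → W i j = y (mf i + 1 - k + j) := by
      intro i j h; simp only [hW]; rw [if_pos h]
    have hWge : ∀ i j, k ≤ j → W i j = y (nf i + (j - k)) := by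
      intro i j h; simp only [hW]; rw [if_neg (by omega)]
    have hfoldZ : ∀ i t, T (fun l : Fin k => W i (t + ↑l)) = Z i t := by
      intro i t; simp only [hZ]
    have hZ0 : ∀ i, Z i 0 = y (mf i + 1) := by
      intro i
      simp only [hZ]
      have h2 := hyu (mf i + 1 - k)
      rw [show mf i + 1 - k + k = mf i + 1 from by (have := hmfk i; omega)] at h2
      rw [h2]
      congr 1
      funext l
      rw [hWlt i (0 + ↑l) (by have := l.isLt; omega)]
      congr 1
      omega
    have hZk : ∀ i, Z i k = y (nf i + k) := by
      intro i
      simp only [hZ]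
      rw [hyu (nf i)]
      congr 1
      funext l
      rw [hWge i (k + ↑l) (by omega)]
      congr 1
      omega
    have hdnf : ∀ c : ℕ, Tendsto (fun i => dist (y (nf i + c)) (y (nf i + c + 1))) atTop (nhds 0) :=
      fun c => hd.comp (tendsto_atTop_mono (fun i => by have := hnf i; simp only [id_eq]; omega) tendsto_id)
    have hdmf : Tendsto (fun i => dist (y (mf i)) (Z i 0)) atTop (nhds 0) := by
      have he : (fun i => dist (y (mf i)) (Z i 0)) = fun i => dist (y (mf i)) (y (mf i + 1)) := by
        funext i; rw [hZ0 i]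
      rw [he]
      exact hd.comp (tendsto_atTop_mono (fun i => by have := hmf i; simp only [id_eq]; omega) tendsto_id)
    have hp0 : ∀ s i, 0 ≤ p s i := by intro s i; simp only [hp]; exact dist_nonneg
    have hpbase : Tendsto (fun i => p (k - 1) i) atTop (nhds 0) := by
      have he : ∀ i, p (k - 1) i = dist (y (nf i + (k - 1))) (y (nf i + (k - 1) + 1)) := by
        intro i
        simp only [hp]
        rw [show k - 1 + 1 = k from by omega, hZk i]
        congr 2
        omega
      simp only [he]
      exact hdnf (k - 1)
    have hstepS : ∀ i s, s + 1 < k →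
        dist (Z i (s + 1)) (Z i (s + 2)) ≤
          β (max (p s i) (max (dist (y (nf i + s)) (y (nf i + (s + 1)))) (p (s + 1) i))) *
            max (p s i) (max (dist (y (nf i + s)) (y (nf i + (s + 1)))) (p (s + 1) i)) := by
      intro i s hs
      have h := key (W i) (s + 1)
      rw [hfoldZ i (s + 1)] at h
      rw [show s + 1 + 1 = s + 2 from by omega] at h
      rw [hfoldZ i (s + 2)] at h
      rw [hWge i (s + 1 + (k - 1)) (by omega), hWge i (s + 1 + k) (by omega)] at h
      rw [show s + 1 + (k - 1) - k = s from by omega,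
        show s + 1 + k - k = s + 1 from by omega] at h
      rw [max_left_comm] at h
      simp only [hp]
      rw [show s + 1 + 1 = s + 2 from by omega]
      exact h
    have hpt : ∀ s, Tendsto (fun i => p (k - 1 - s) i) atTop (nhds 0) := by
      intro s
      induction s with
      | zero => simpa using hpbase
      | succ s ih =>
        by_cases hs : s + 1 ≤ k - 1
        · have hj : k - 1 - s = k - 1 - (s + 1) + 1 := by omega
          rw [hj] at ih
          set j := k - 1 - (s + 1) with hjd
          refine geraghty_G1 hβ (p := fun i => p j i)
            (a := fun i => dist (y (nf i + j)) (y (nf i + (j + 1))) + p (j + 1) i)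
            (g := fun i => max (dist (y (nf i + j)) (y (nf i + (j + 1)))) (p (j + 1) i))
            (fun i => hp0 j i) (fun i => add_nonneg dist_nonneg (hp0 _ _)) ?_
            (fun i => le_max_of_le_left dist_nonneg) ?_ ?_
          · simpa [add_assoc] using (hdnf j).add ih
          · simpa [add_assoc] using (hdnf j).max ih
          · intro i
            show p j i ≤ (dist (y (nf i + j)) (y (nf i + (j + 1))) + p (j + 1) i) +
              β (max (p j i) (max (dist (y (nf i + j)) (y (nf i + (j + 1)))) (p (j + 1) i))) *
                max (p j i) (max (dist (y (nf i + j)) (y (nf i + (j + 1)))) (p (j + 1) i))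
            have h := hstepS i j (by omega)
            have htri : p j i ≤ dist (y (nf i + j)) (y (nf i + (j + 1))) + p (j + 1) i +
                dist (Z i (j + 1)) (Z i (j + 2)) := by
              simp only [hp]
              rw [show j + 1 + 1 = j + 2 from by omega]
              have h4 := dist_triangle4 (y (nf i + j)) (y (nf i + (j + 1))) (Z i (j + 2)) (Z i (j + 1))
              rw [dist_comm (Z i (j + 2)) (Z i (j + 1))] at h4
              linarith
            linarith
        · have h2 : k - 1 - (s + 1) = k - 1 - s := by omega
          rw [h2]; exact ih
    have hp_all : ∀ t, t + 1 ≤ k → Tendsto (fun i => p t i) atTop (nhds 0) := by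
      intro t ht
      have := hpt (k - 1 - t)
      rwa [show k - 1 - (k - 1 - t) = t from by omega] at this
    have hstep0 : ∀ i,
        dist (Z i 0) (Z i 1) ≤
          β (max (dist (y (mf i)) (y (nf i)))
              (max (dist (y (mf i)) (Z i 0)) (p 0 i))) *
            max (dist (y (mf i)) (y (nf i)))
              (max (dist (y (mf i)) (Z i 0)) (p 0 i)) := by
      intro i
      have h := key (W i) 0
      rw [hfoldZ i 0] at h
      rw [show (0:ℕ) + 1 = 1 from by omega] at h
      rw [hfoldZ i 1] at h
      rw [hWlt i (0 + (k - 1)) (by omega)] at h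
      rw [hWge i (0 + k) (by omega)] at h
      rw [show mf i + 1 - k + (0 + (k - 1)) = mf i from by (have := hmfk i; omega)] at h
      rw [show nf i + (0 + k - k) = nf i from by omega] at h
      simp only [hp]
      rw [show (0:ℕ) + 1 = 1 from by omega]
      rw [show nf i + 0 = nf i from by omega]
      exact h
    obtain ⟨R, hR⟩ : ∃ R : ℕ → ℝ, R = fun i => ∑ s ∈ Finset.range (k - 1),
        max (p s i) (max (dist (y (nf i + s)) (y (nf i + (s + 1)))) (p (s + 1) i)) := ⟨_, rfl⟩
    have hRt : Tendsto R atTop (nhds 0) := by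
      rw [hR]
      have h := tendsto_finset_sum (Finset.range (k - 1)) (f := fun s i =>
          max (p s i) (max (dist (y (nf i + s)) (y (nf i + (s + 1)))) (p (s + 1) i)))
        (a := fun _ => (0:ℝ)) (fun s hs => by
          have hs' : s + 1 < k := by simp only [Finset.mem_range] at hs; omega
          have h1 := hp_all s (by omega)
          have h2 := hp_all (s + 1) (by omega)
          have h3 := hdnf s
          simpa [add_assoc] using h1.max (h3.max h2))
      simpa using h
    obtain ⟨A, hA⟩ : ∃ A : ℕ → ℝ, A = fun i => ∑ t ∈ Finset.range k,
        dist (y (nf i + t)) (y (nf i + (t + 1))) := ⟨_, rfl⟩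
    have hAt : Tendsto A atTop (nhds 0) := by
      rw [hA]
      have h := tendsto_finset_sum (Finset.range k) (f := fun t i =>
          dist (y (nf i + t)) (y (nf i + (t + 1)))) (a := fun _ => (0:ℝ))
        (fun t ht => hdnf t)
      simpa using h
    have hAb : ∀ i, dist (y (nf i)) (y (nf i + k)) ≤ A i := by
      intro i
      rw [hA]
      have h := dist_le_range_sum_dist (fun t => y (nf i + t)) k
      simpa using h
    have hsum : ∀ i, dist (Z i 0) (Z i k) ≤
        β (max (dist (y (mf i)) (y (nf i))) (max (dist (y (mf i)) (Z i 0)) (p 0 i))) *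
          max (dist (y (mf i)) (y (nf i))) (max (dist (y (mf i)) (Z i 0)) (p 0 i)) + R i := by
      intro i
      have h1 : dist (Z i 0) (Z i k) ≤ ∑ t ∈ Finset.range k, dist (Z i t) (Z i (t + 1)) :=
        dist_le_range_sum_dist (fun t => Z i t) k
      have h2 := Finset.sum_range_succ' (fun t => dist (Z i t) (Z i (t + 1))) (k - 1)
      rw [show k - 1 + 1 = k from by omega] at h2
      have h7 : ∑ t ∈ Finset.range k, dist (Z i t) (Z i (t + 1)) =
          (∑ s ∈ Finset.range (k - 1), dist (Z i (s + 1)) (Z i (s + 1 + 1))) +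
            dist (Z i 0) (Z i 1) := by simpa using h2
      rw [h7] at h1
      have h3 : ∑ s ∈ Finset.range (k - 1), dist (Z i (s + 1)) (Z i (s + 1 + 1)) ≤ R i := by
        rw [hR]
        apply Finset.sum_le_sum
        intro s hs
        have hsk : s + 1 < k := by simp only [Finset.mem_range] at hs; omega
        have h4 := hstepS i s hsk
        rw [show s + 1 + 1 = s + 2 from by omega]
        refine le_trans h4 ?_
        have hM0 : (0:ℝ) ≤ max (p s i)
            (max (dist (y (nf i + s)) (y (nf i + (s + 1)))) (p (s + 1) i)) :=
          le_trans (hp0 s i) (le_max_left _ _)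
        exact mul_le_of_le_one_left hM0 (hβ.1 _ hM0).2.le
      have h5 := hstep0 i
      linarith
    have hlow2 : ∀ i, dist (y (mf i)) (y (nf i)) ≤
        dist (y (mf i)) (Z i 0) + dist (Z i 0) (Z i k) + A i := by
      intro i
      have h4 := dist_triangle4 (y (mf i)) (Z i 0) (Z i k) (y (nf i))
      have h5 : dist (Z i k) (y (nf i)) ≤ A i := by
        rw [hZk i, dist_comm]
        exact hAb i
      linarith
    have hS0 : ∀ i, (0:ℝ) ≤ dist (y (mf i)) (y (nf i)) := fun i => dist_nonneg
    obtain ⟨c, hc⟩ : ∃ c : ℕ → ℝ, c = fun i => dist (y (mf i)) (Z i 0) + R i + A i := ⟨_, rfl⟩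
    have hct : Tendsto c atTop (nhds 0) := by
      rw [hc]; simpa using (hdmf.add hRt).add hAt
    have hev1 : ∀ᶠ i in atTop, dist (y (mf i)) (Z i 0) < ε := hdmf.eventually_lt_const hε
    have hev2 : ∀ᶠ i in atTop, p 0 i < ε := (hp_all 0 (by omega)).eventually_lt_const hε
    have hblow : ∀ᶠ i in atTop, 1 - c i / ε ≤ β (dist (y (mf i)) (y (nf i))) := by
      filter_upwards [hev1, hev2] with i h1 h2
      have hmax : max (dist (y (mf i)) (y (nf i))) (max (dist (y (mf i)) (Z i 0)) (p 0 i))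
          = dist (y (mf i)) (y (nf i)) :=
        max_eq_left (max_le (le_trans h1.le (hsep i)) (le_trans h2.le (hsep i)))
      have h6 := hsum i
      rw [hmax] at h6
      have h7 := hlow2 i
      have h8 : (1 - β (dist (y (mf i)) (y (nf i)))) * dist (y (mf i)) (y (nf i)) ≤ c i := by
        rw [hc]
        show _ ≤ dist (y (mf i)) (Z i 0) + R i + A i
        nlinarith [h6, h7]
      exact geraghty_sub_div_le (hβ.1 _ (hS0 i)).2.le hε (hsep i) h8
    have hBlim : Tendsto (fun i => β (dist (y (mf i)) (y (nf i)))) atTop (nhds 1) := by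
      have hl : Tendsto (fun i => 1 - c i / ε) atTop (nhds 1) := by
        have := (tendsto_const_nhds (x := (1:ℝ)) (f := atTop (α := ℕ))).sub (hct.div_const ε)
        simpa using this
      exact tendsto_of_tendsto_of_tendsto_of_le_of_le' hl tendsto_const_nhds hblow
        (Eventually.of_forall fun i => (hβ.1 _ (hS0 i)).2.le)
    have hSlim : Tendsto (fun i => dist (y (mf i)) (y (nf i))) atTop (nhds 0) :=
      hβ.2 _ hS0 hBlim
    have : ε ≤ 0 := ge_of_tendsto hSlim (Eventually.of_forall hsep)
    linarith
  -- part (d): the limit is a fixed point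
  obtain ⟨u, hu⟩ := cauchySeq_tendsto_of_complete hcau
  refine ⟨u, ?_⟩
  obtain ⟨V, hV⟩ : ∃ V : ℕ → ℕ → X, V = fun n j => if j < k then y (n + j) else u := ⟨_, rfl⟩
  obtain ⟨Q, hQ⟩ : ∃ Q : ℕ → ℕ → X, Q = fun n t => T (fun l : Fin k => V n (t + ↑l)) := ⟨_, rfl⟩
  have hVlt : ∀ n j, j < k → V n j = y (n + j) := by
    intro n j h; simp only [hV]; rw [if_pos h]
  have hVge : ∀ n j, k ≤ j → V n j = u := by
    intro n j h; simp only [hV]; rw [if_neg (by omega)]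
  have hfoldQ : ∀ n t, T (fun l : Fin k => V n (t + ↑l)) = Q n t := by
    intro n t; simp only [hQ]
  have hQ0 : ∀ n, Q n 0 = y (n + k) := by
    intro n
    simp only [hQ]
    rw [hyu n]
    congr 1
    funext l
    rw [hVlt n (0 + ↑l) (by have := l.isLt; omega)]
    congr 1
    omega
  have hQk : ∀ n, Q n k = T (fun _ => u) := by
    intro n
    simp only [hQ]
    congr 1
    funext l
    exact hVge n (k + ↑l) (by omega)
  have hyuk : Tendsto (fun n => y (n + k)) atTop (nhds u) := hu.comp (tendsto_add_atTop_nat k)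
  have hqt : ∀ t, t ≤ k → Tendsto (fun n => dist u (Q n t)) atTop (nhds 0) := by
    intro t
    induction t with
    | zero =>
      intro _
      have he : (fun n => dist u (Q n 0)) = fun n => dist u (y (n + k)) := by
        funext n; rw [hQ0 n]
      rw [he]
      simpa using (tendsto_const_nhds (x := u) (f := atTop (α := ℕ))).dist hyuk
    | succ t ih =>
      intro ht
      have iht := ih (by omega)
      have hst : ∀ n, dist u (Q n (t + 1)) ≤ dist u (Q n t) +
          β (max (dist u (Q n (t + 1)))
              (max (dist (V n (t + (k - 1))) u) (dist (V n (t + (k - 1))) (Q n t)))) *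
            max (dist u (Q n (t + 1)))
              (max (dist (V n (t + (k - 1))) u) (dist (V n (t + (k - 1))) (Q n t))) := by
        intro n
        have h := key (V n) t
        rw [hfoldQ n t] at h
        rw [hfoldQ n (t + 1)] at h
        rw [hVge n (t + k) (by omega)] at h
        have e : ∀ x1 x2 x3 : ℝ, max x1 (max x2 x3) = max x3 (max x1 x2) := by
          intro x1 x2 x3
          rw [max_comm x2 x3, max_left_comm]
        rw [e] at h
        calc dist u (Q n (t + 1)) ≤ dist u (Q n t) + dist (Q n t) (Q n (t + 1)) :=
              dist_triangle _ _ _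
          _ ≤ _ := add_le_add_right h _
      refine geraghty_G1 hβ (p := fun n => dist u (Q n (t + 1))) (a := fun n => dist u (Q n t))
        (g := fun n => max (dist (V n (t + (k - 1))) u) (dist (V n (t + (k - 1))) (Q n t)))
        (fun n => dist_nonneg) (fun n => dist_nonneg) iht
        (fun n => le_max_of_le_left dist_nonneg) ?_ (fun n => hst n)
      have hA : Tendsto (fun n => dist (V n (t + (k - 1))) u) atTop (nhds 0) := by
        by_cases hcs : t + (k - 1) < k
        · have he : (fun n => dist (V n (t + (k - 1))) u) =
              fun n => dist (y (n + (t + (k - 1)))) u := by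
            funext n; rw [hVlt n _ hcs]
          rw [he]
          have h2 : Tendsto (fun n => y (n + (t + (k - 1)))) atTop (nhds u) :=
            hu.comp (tendsto_add_atTop_nat _)
          simpa using h2.dist (tendsto_const_nhds (x := u))
        · have he : (fun n => dist (V n (t + (k - 1))) u) = fun _ => (0:ℝ) := by
            funext n; rw [hVge n _ (by omega)]; simp
          rw [he]
          exact tendsto_const_nhds
      have hB : Tendsto (fun n => dist (V n (t + (k - 1))) (Q n t)) atTop (nhds 0) := by
        apply squeeze_zero (fun n => dist_nonneg)
          (fun n => dist_triangle (V n (t + (k - 1))) u (Q n t))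
        simpa using hA.add iht
      simpa using hA.max hB
  have hfin := hqt k le_rfl
  have he : (fun n => dist u (Q n k)) = fun _ => dist u (T (fun _ => u)) := by
    funext n; rw [hQk n]
  rw [he] at hfin
  have h0 : dist u (T (fun _ => u)) = 0 := tendsto_nhds_unique tendsto_const_nhds hfin
  exact (dist_eq_zero.mp h0).symm
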